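/- Let k ≥ 4 be an even integer and set p := k − 2 (even). Let {v_1,…,v_n} be an orthonormal basis of ℝ^n and κ_r < 0, λ_r ∈ ℝ for r = 1,…,n. For each r with λ_r > 0 set c_r := (−κ_r/λ_r)^{1/p}, and define ℛ_even := { x₀ ∈ ℝ^n : |⟨v_r, x₀⟩| < c_r for all r with λ_r > 0 }. Then for every differentiable solution x : [0,∞) → ℝ^n of ẋ(t) = Σ_{r=1}^n (κ_r·⟨v_r, x(t)⟩ + λ_r·⟨v_r, x(t)⟩^{k-1})·v_r with x(0) ∈ ℛ_even, one has x(t) ∈ ℛ_even for all t ≥ 0 and x(t) → 0 as t → ∞. -/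

import Mathlib

open Set Filter Real

lemma aux_inv (g G : ℝ → ℝ) (A B : ℝ) (hAB : A < B)
    (hd : ∀ t, 0 ≤ t → HasDerivAt g (G t) t)
    (hneg : ∀ t, 0 ≤ t → g t ≤ B → G t ≤ 0)
    (h0 : g 0 ≤ A) : ∀ t, 0 ≤ t → g t ≤ A := by
  intro t₀ ht₀
  by_contra h
  push_neg at h
  have ht₀pos : 0 < t₀ := by
    rcases ht₀.lt_or_eq with h' | h'
    · exact h'
    · exact absurd h0 (by rw [h']; exact not_le.2 h)
  have hcont : ContinuousOn g (Icc 0 t₀) := fun t ht =>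
    ((hd t ht.1).continuousAt).continuousWithinAt
  set S : Set ℝ := Icc 0 t₀ ∩ g ⁻¹' (Iic A) with hS
  have hScl : IsClosed S := hcont.preimage_isClosed_of_isClosed isClosed_Icc isClosed_Iic
  have hSne : S.Nonempty := ⟨0, ⟨le_refl 0, ht₀⟩, h0⟩
  have hSbdd : BddAbove S := BddAbove.mono Set.inter_subset_left bddAbove_Icc
  set T := sSup S with hT
  have hTS : T ∈ S := hScl.csSup_mem hSne hSbdd
  have hT0 : 0 ≤ T := hTS.1.1
  have hTt₀ : T ≤ t₀ := hTS.1.2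
  have hgT : g T ≤ A := hTS.2
  have hTlt : T < t₀ := lt_of_le_of_ne hTt₀ (fun he => absurd (he ▸ hgT) (not_le.2 h))
  set B' := min B (g t₀) with hB'
  have hAB' : A < B' := lt_min hAB h
  set S₂ : Set ℝ := Icc T t₀ ∩ g ⁻¹' (Ici B') with hS₂
  have hcont₂ : ContinuousOn g (Icc T t₀) := hcont.mono (Icc_subset_Icc hT0 le_rfl)
  have hS₂cl : IsClosed S₂ := hcont₂.preimage_isClosed_of_isClosed isClosed_Icc isClosed_Ici
  have hS₂ne : S₂.Nonempty := ⟨t₀, ⟨hTt₀, le_rfl⟩, show B' ≤ g t₀ from min_le_right _ _⟩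
  have hS₂bdd : BddBelow S₂ := BddBelow.mono Set.inter_subset_left bddBelow_Icc
  set τ := sInf S₂ with hτ
  have hτS : τ ∈ S₂ := hS₂cl.csInf_mem hS₂ne hS₂bdd
  have hτT : T ≤ τ := hτS.1.1
  have hτt₀ : τ ≤ t₀ := hτS.1.2
  have hgτ : B' ≤ g τ := hτS.2
  have hTτ : T < τ := lt_of_le_of_ne hτT (fun he => absurd (he ▸ hgτ) (not_le.2 (lt_of_le_of_lt hgT hAB')))
  -- on Ioo T τ, g < B'
  have hmid : ∀ s ∈ Ioo T τ, g s < B' := by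
    intro s hs
    by_contra hc
    push_neg at hc
    have : s ∈ S₂ := ⟨⟨hs.1.le, hs.2.le.trans hτt₀⟩, hc⟩
    exact absurd (csInf_le hS₂bdd this) (not_le.2 hs.2)
  have hanti : AntitoneOn g (Icc T τ) := by
    apply antitoneOn_of_deriv_nonpos (convex_Icc T τ)
      (hcont₂.mono (Icc_subset_Icc le_rfl hτt₀))
    · intro s hs
      rw [interior_Icc] at hs
      exact ((hd s (hT0.trans hs.1.le)).differentiableAt).differentiableWithinAt
    · intro s hs
      rw [interior_Icc] at hs
      have hs0 : 0 ≤ s := hT0.trans hs.1.le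
      rw [(hd s hs0).deriv]
      exact hneg s hs0 ((hmid s hs).le.trans (min_le_left _ _))
  have := hanti (left_mem_Icc.2 hTτ.le) (right_mem_Icc.2 hTτ.le) hTτ.le
  linarith [lt_of_le_of_lt hgT hAB']

lemma aux_decay (g G : ℝ → ℝ) (ν : ℝ) (hν : 0 < ν)
    (hd : ∀ t, 0 ≤ t → HasDerivAt g (G t) t)
    (hG : ∀ t, 0 ≤ t → G t ≤ -(2 * ν) * g t) :
    ∀ t, 0 ≤ t → g t ≤ g 0 * Real.exp (-(2 * ν) * t) := by
  intro t ht
  set h : ℝ → ℝ := fun s => g s * Real.exp (2 * ν * s) with hh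
  have hde : ∀ s : ℝ, HasDerivAt (fun u => Real.exp (2 * ν * u)) (Real.exp (2 * ν * s) * (2 * ν)) s := by
    intro s
    have : HasDerivAt (fun u : ℝ => 2 * ν * u) (2 * ν) s := by
      simpa using (hasDerivAt_id s).const_mul (2 * ν)
    exact this.exp
  have hhd : ∀ s, 0 ≤ s → HasDerivAt h
      (G s * Real.exp (2 * ν * s) + g s * (Real.exp (2 * ν * s) * (2 * ν))) s :=
    fun s hs => (hd s hs).mul (hde s)
  have hanti : AntitoneOn h (Ici (0:ℝ)) := by
    apply antitoneOn_of_deriv_nonpos (convex_Ici 0)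
    · exact fun s hs => ((hhd s hs).continuousAt).continuousWithinAt
    · intro s hs
      rw [interior_Ici] at hs
      exact ((hhd s hs.le).differentiableAt).differentiableWithinAt
    · intro s hs
      rw [interior_Ici] at hs
      rw [(hhd s hs.le).deriv]
      have := hG s hs.le
      have hexp : 0 < Real.exp (2 * ν * s) := Real.exp_pos _
      nlinarith
  have hle : h t ≤ h 0 := hanti (self_mem_Ici) (mem_Ici.2 ht) ht
  have h0 : h 0 = g 0 := by simp [hh]
  have : g t * Real.exp (2 * ν * t) ≤ g 0 := h0 ▸ hle
  have hexp : 0 < Real.exp (2 * ν * t) := Real.exp_pos _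
  rw [neg_mul, Real.exp_neg, ← div_eq_mul_inv, le_div_iff₀ hexp]
  linarith

lemma sq_abs_le' {a b : ℝ} (h : a^2 ≤ b^2) (hb : 0 ≤ b) : |a| ≤ b := by
  have := Real.sqrt_le_sqrt h
  rwa [Real.sqrt_sq_eq_abs, Real.sqrt_sq hb] at this

/-- Even-degree region of attraction ℛ_even is forward invariant and
attracts to the origin. -/
theorem stmt_6 (k n : ℕ) (hk : 4 ≤ k) (hke : Even k)
    (v : OrthonormalBasis (Fin n) ℝ (EuclideanSpace ℝ (Fin n)))
    (κ lam : Fin n → ℝ) (hκ : ∀ r, κ r < 0)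
    (p : ℕ) (hp : p = k - 2)
    (c : Fin n → ℝ)
    (hc : ∀ r, 0 < lam r → c r = ((-κ r) / lam r) ^ ((1 : ℝ) / (p : ℝ)))
    (R : Set (EuclideanSpace ℝ (Fin n)))
    (hR : R = {x₀ | ∀ r, 0 < lam r → |(inner ℝ (v r) x₀ : ℝ)| < c r})
    (x : ℝ → EuclideanSpace ℝ (Fin n))
    (hx : ∀ t : ℝ, 0 ≤ t →
      HasDerivAt x
        (∑ r, (κ r * (inner ℝ (v r) (x t) : ℝ)
          + lam r * (inner ℝ (v r) (x t) : ℝ) ^ (k - 1)) • v r) t)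
    (hx0 : x 0 ∈ R) :
    (∀ t : ℝ, 0 ≤ t → x t ∈ R)
    ∧ Filter.Tendsto x Filter.atTop (nhds 0) := by
  have hppos : 0 < p := by omega
  have hpe : Even p := by
    obtain ⟨m, hm⟩ := hke
    exact ⟨m - 1, by omega⟩
  set y : Fin n → ℝ → ℝ := fun r t => (inner ℝ (v r) (x t) : ℝ) with hy
  rw [hR] at hx0
  -- derivative of the coordinates
  have hyd : ∀ r, ∀ t, 0 ≤ t →
      HasDerivAt (y r) (κ r * y r t + lam r * (y r t) ^ (k - 1)) t := by
    intro r t ht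
    have hL := (innerSL ℝ (v r)).hasFDerivAt.comp_hasDerivAt t (hx t ht)
    have hval : (inner ℝ (v r) (∑ s, (κ s * y s t + lam s * (y s t) ^ (k - 1)) • v s) : ℝ)
        = κ r * y r t + lam r * (y r t) ^ (k - 1) := by
      rw [inner_sum]
      simp only [real_inner_smul_right]
      rw [Finset.sum_eq_single r]
      · rw [orthonormal_iff_ite.mp v.orthonormal]; simp
      · intro s _ hs
        rw [orthonormal_iff_ite.mp v.orthonormal]
        simp [Ne.symm hs]
      · simp
    have hL' : HasDerivAt (y r)
        ((inner ℝ (v r) (∑ s, (κ s * y s t + lam s * (y s t) ^ (k - 1)) • v s) : ℝ)) t := hL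
    rwa [hval] at hL'
  set G : Fin n → ℝ → ℝ :=
    fun r t => 2 * y r t * (κ r * y r t + lam r * y r t ^ (k - 1)) with hG
  have hgd : ∀ r t, 0 ≤ t → HasDerivAt (fun s => y r s ^ 2) (G r t) t := by
    intro r t ht
    have h2 := (hyd r t ht).fun_pow 2
    refine h2.congr_deriv ?_
    show _ = 2 * y r t * (κ r * y r t + lam r * y r t ^ (k - 1))
    norm_num
  -- the key factorization
  have hGeq : ∀ r t, G r t = 2 * (y r t) ^ 2 * (κ r + lam r * (y r t) ^ p) := by
    intro r t
    have hyk' : y r t * y r t ^ (k - 1) = y r t ^ 2 * y r t ^ p := by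
      rw [mul_comm, ← pow_succ, show (k - 1) + 1 = 2 + p by omega, pow_add]
    simp only [hG]
    linear_combination (2 * lam r) * hyk'
  -- facts about c when lam r > 0
  have hcpos : ∀ r, 0 < lam r → 0 ≤ c r := by
    intro r hl
    rw [hc r hl]
    exact Real.rpow_nonneg (div_pos (by linarith [hκ r]) hl).le _
  have hcp : ∀ r, 0 < lam r → (c r) ^ p = -κ r / lam r := by
    intro r hl
    have hb : (0:ℝ) < -κ r / lam r := div_pos (by linarith [hκ r]) hl
    rw [hc r hl, ← Real.rpow_natCast (((-κ r) / lam r) ^ ((1:ℝ) / (p:ℝ))) p,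
      ← Real.rpow_mul hb.le, one_div,
      inv_mul_cancel₀ (by exact_mod_cast hppos.ne' : (p:ℝ) ≠ 0), Real.rpow_one]
  -- even power is abs power
  have hpabs : ∀ (a : ℝ), a ^ p = |a| ^ p := fun a => (hpe.pow_abs a).symm
  -- invariance of each coordinate
  have hinv : ∀ r t, 0 ≤ t → (y r t) ^ 2 ≤ (y r 0) ^ 2 := by
    intro r
    by_cases hl : 0 < lam r
    · apply aux_inv (fun t => y r t ^ 2) (G r) ((y r 0) ^ 2) ((c r) ^ 2) _ (hgd r) _ le_rfl
      · -- A < B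
        have h0 := hx0 r hl
        calc (y r 0) ^ 2 = |y r 0| ^ 2 := (sq_abs _).symm
          _ < (c r) ^ 2 := by
            apply pow_lt_pow_left₀ h0 (abs_nonneg _) (by norm_num)
      · -- hneg
        intro t ht hgB
        have habs : |y r t| ≤ c r := sq_abs_le' hgB (hcpos r hl)
        have hyp : (y r t) ^ p ≤ (c r) ^ p := by
          rw [hpabs]
          exact pow_le_pow_left₀ (abs_nonneg _) habs p
        have hfac : κ r + lam r * (y r t) ^ p ≤ 0 := by
          have h1 : lam r * (y r t) ^ p ≤ lam r * ((c r) ^ p) :=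
            mul_le_mul_of_nonneg_left hyp hl.le
          rw [hcp r hl] at h1
          have : lam r * (-κ r / lam r) = -κ r := by
            field_simp
          linarith [this ▸ h1]
        rw [hGeq]
        nlinarith [sq_nonneg (y r t)]
    · apply aux_inv (fun t => y r t ^ 2) (G r) ((y r 0) ^ 2) ((y r 0) ^ 2 + 1)
        (by linarith) (hgd r) _ le_rfl
      intro t ht _
      push_neg at hl
      have hfac : κ r + lam r * (y r t) ^ p ≤ 0 := by
        have h1 : lam r * (y r t) ^ p ≤ 0 :=
          mul_nonpos_of_nonpos_of_nonneg hl (hpe.pow_nonneg _)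
        linarith [hκ r]
      rw [hGeq]
      nlinarith [sq_nonneg (y r t)]
  -- decay of each coordinate
  have hy0 : ∀ r, Filter.Tendsto (y r) Filter.atTop (nhds 0) := by
    intro r
    obtain ⟨ν, hνpos, hGν⟩ :
        ∃ ν : ℝ, 0 < ν ∧ ∀ t, 0 ≤ t → G r t ≤ -(2 * ν) * (y r t) ^ 2 := by
      by_cases hl : 0 < lam r
      · refine ⟨-(κ r + lam r * |y r 0| ^ p), ?_, ?_⟩
        · have h0 := hx0 r hl
          have : |y r 0| ^ p < (c r) ^ p :=
            pow_lt_pow_left₀ h0 (abs_nonneg _) hppos.ne'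
          rw [hcp r hl] at this
          have h2 : lam r * |y r 0| ^ p < lam r * (-κ r / lam r) :=
            (mul_lt_mul_iff_right₀ hl).2 this
          have h3 : lam r * (-κ r / lam r) = -κ r := by field_simp
          rw [h3] at h2
          linarith
        · intro t ht
          have habs : |y r t| ≤ |y r 0| := sq_abs_le' (le_of_le_of_eq (hinv r t ht) (sq_abs _).symm) (abs_nonneg _)
          have hyp : (y r t) ^ p ≤ |y r 0| ^ p := by
            rw [hpabs]
            exact pow_le_pow_left₀ (abs_nonneg _) habs p
          have hfac : κ r + lam r * (y r t) ^ p ≤ κ r + lam r * |y r 0| ^ p := by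
            have := mul_le_mul_of_nonneg_left hyp hl.le
            linarith
          rw [hGeq]
          nlinarith [sq_nonneg (y r t)]
      · refine ⟨-κ r, by linarith [hκ r], ?_⟩
        intro t ht
        push_neg at hl
        have h1 : lam r * (y r t) ^ p ≤ 0 :=
          mul_nonpos_of_nonpos_of_nonneg hl (hpe.pow_nonneg _)
        rw [hGeq]
        nlinarith [sq_nonneg (y r t)]
    have hbound := aux_decay (fun t => y r t ^ 2) (G r) ν hνpos (hgd r) hGν
    have hexp : Filter.Tendsto (fun t : ℝ => (y r 0) ^ 2 * Real.exp (-(2 * ν) * t))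
        Filter.atTop (nhds 0) := by
      have hcomp : Filter.Tendsto (fun t : ℝ => Real.exp (-(2 * ν) * t))
          Filter.atTop (nhds 0) := by
        apply Real.tendsto_exp_atBot.comp
        exact Filter.Tendsto.const_mul_atTop_of_neg (by linarith : -(2*ν) < 0) Filter.tendsto_id
      simpa using hcomp.const_mul ((y r 0) ^ 2)
    have hsq : Filter.Tendsto (fun t => y r t ^ 2) Filter.atTop (nhds 0) := by
      apply tendsto_of_tendsto_of_tendsto_of_le_of_le' tendsto_const_nhds hexp
      · exact Filter.Eventually.of_forall (fun t => sq_nonneg _)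
      · filter_upwards [Filter.eventually_ge_atTop (0:ℝ)] with t ht
        exact hbound t ht
    have habs : Filter.Tendsto (fun t => |y r t|) Filter.atTop (nhds 0) := by
      have := (Real.continuous_sqrt.tendsto 0).comp hsq
      simp only [Real.sqrt_zero] at this
      refine this.congr (fun t => ?_)
      simp [Real.sqrt_sq_eq_abs]
    apply tendsto_of_tendsto_of_tendsto_of_le_of_le (by simpa using habs.neg) habs
    · exact fun t => neg_abs_le _
    · exact fun t => le_abs_self _
  constructor
  · intro t ht
    rw [hR]
    intro r hl
    have habs : |y r t| ≤ |y r 0| := sq_abs_le' (le_of_le_of_eq (hinv r t ht) (sq_abs _).symm) (abs_nonneg _)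
    exact lt_of_le_of_lt habs (hx0 r hl)
  · have hrepr : ∀ t, x t = ∑ r, y r t • v r := fun t => (v.sum_repr' (x t)).symm
    have hsum : Filter.Tendsto (fun t => ∑ r, y r t • v r) Filter.atTop
        (nhds (∑ r : Fin n, (0:ℝ) • v r)) :=
      tendsto_finset_sum _ (fun r _ => (hy0 r).smul_const (v r))
    simp only [zero_smul, Finset.sum_const_zero] at hsum
    exact hsum.congr (fun t => (hrepr t).symm)
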